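/- Let q be a power of a prime p, let F̄ be an algebraic closure of F_p, let n ≥ 1, and let σ be a permutation of {1,…,n}. Consider the group G_σ = {(a₁,…,a_n) ∈ (F̄ˣ)^n : a_i = (a_{σ⁻¹(i)})^q for all i} under componentwise multiplication. Then G_σ is isomorphic to the product, over the cycles c of σ (including fixed points as cycles of length 1), of the unit groups F_{q^{ℓ(c)}}ˣ, where ℓ(c) is the length of the cycle c; in particular G_σ has order ∏_c (q^{ℓ(c)} − 1). -/

import Mathlib

/-- An algebraic closure of `F_p`. -/
abbrev Fbar (p : ℕ) [Fact p.Prime] : Type := AlgebraicClosure (ZMod p)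

/-- The unit group `F_Nˣ` of the finite subfield `{x : x^N = x}` of a field
`F`, as a subgroup of `Fˣ` (for `N = q^ℓ` this is `F_{q^ℓ}ˣ ⊆ F̄ˣ`). -/
def subfieldUnits (F : Type) [Field F] (N : ℕ) : Subgroup Fˣ where
  carrier := {x : Fˣ | (x : F) ^ N = (x : F)}
  one_mem' := by simp
  mul_mem' := by
    intro a b ha hb
    simp only [Set.mem_setOf_eq, Units.val_mul, mul_pow] at *
    rw [ha, hb]
  inv_mem' := by
    intro a ha
    simp only [Set.mem_setOf_eq] at *
    have h : a ^ N = a := Units.ext (by simpa using ha)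
    have h' : a⁻¹ ^ N = a⁻¹ := by rw [inv_pow, h]
    calc ((a⁻¹ : Fˣ) : F) ^ N = ((a⁻¹ ^ N : Fˣ) : F) := (Units.val_pow_eq_pow_val _ _).symm
      _ = ((a⁻¹ : Fˣ) : F) := by rw [h']

lemma mem_subfieldUnits_iff {F : Type} [Field F] {N : ℕ} (hN : 0 < N) (x : Fˣ) :
    x ∈ subfieldUnits F N ↔ x ^ (N - 1) = 1 := by
  have key : x ∈ subfieldUnits F N ↔ x ^ N = x := by
    constructor
    · intro h; exact Units.ext (by rw [Units.val_pow_eq_pow_val]; exact h)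
    · intro h
      show (x : F) ^ N = (x : F)
      rw [← Units.val_pow_eq_pow_val, h]
  rw [key]
  conv_lhs => rw [show N = (N - 1) + 1 by omega, pow_succ]
  constructor
  · intro h; exact mul_right_cancel (show x ^ (N-1) * x = 1 * x by rw [h, one_mul])
  · intro h; rw [h, one_mul]

lemma card_subfieldUnits (p : ℕ) [Fact p.Prime] (m : ℕ) (hm : 0 < m) :
    Nat.card (subfieldUnits (Fbar p) (p ^ m)) = p ^ m - 1 := by
  have hp : 2 ≤ p := (Fact.out : p.Prime).two_le
  have hN : 2 ≤ p ^ m := by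
    calc 2 ≤ p := hp
    _ = p ^ 1 := (pow_one p).symm
    _ ≤ p ^ m := Nat.pow_le_pow_right (by omega) hm
  have heq : subfieldUnits (Fbar p) (p ^ m) = rootsOfUnity (p ^ m - 1) (Fbar p) := by
    ext x
    rw [mem_subfieldUnits_iff (by omega), mem_rootsOfUnity]
  have h1 : NeZero (p ^ m - 1) := ⟨by omega⟩
  have h2 : NeZero ((p ^ m - 1 : ℕ) : Fbar p) := by
    constructor
    rw [Ne, CharP.cast_eq_zero_iff (Fbar p) p]
    intro hdvd
    have h3 : p ∣ p ^ m := dvd_pow_self p (by omega)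
    have h4 : p ∣ p ^ m - (p ^ m - 1) := Nat.dvd_sub h3 hdvd
    rw [show p ^ m - (p ^ m - 1) = 1 by omega] at h4
    have := Nat.le_of_dvd one_pos h4
    omega
  rw [heq, HasEnoughRootsOfUnity.natCard_rootsOfUnity]

lemma pow_q_mod {G : Type*} [Group G] {u : G} {q ℓ : ℕ} (hℓ : 0 < ℓ)
    (h : u ^ q ^ ℓ = u) (k : ℕ) : u ^ q ^ k = u ^ q ^ (k % ℓ) := by
  have step : ∀ a : ℕ, u ^ q ^ (a + ℓ) = u ^ q ^ a := by
    intro a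
    rw [pow_add, mul_comm, pow_mul, h]
  have gen : ∀ m a : ℕ, u ^ q ^ (a + ℓ * m) = u ^ q ^ a := by
    intro m
    induction m with
    | zero => simp
    | succ t ih =>
      intro a
      rw [Nat.mul_succ, ← Nat.add_assoc, step, ih]
  calc u ^ q ^ k = u ^ q ^ (k % ℓ + ℓ * (k / ℓ)) := by rw [Nat.mod_add_div]
    _ = u ^ q ^ (k % ℓ) := gen _ _

/-- Let `q` be a power of a prime `p`, `F̄` an algebraic
closure of `F_p`, `n ≥ 1` and `σ` a permutation of `{1,…,n}`.  The group
`G_σ = {(a₁,…,a_n) ∈ (F̄ˣ)^n : a_i = (a_{σ⁻¹(i)})^q}` is isomorphic to the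
product, over a set `s` of representatives of the cycles of `σ` (including
fixed points as cycles of length `1`), of the unit groups `F_{q^{ℓ(c)}}ˣ`,
where `ℓ(c)` is the cycle length (the minimal period of `σ` at the
representative); in particular its order is `∏_c (q^{ℓ(c)} − 1)`. -/
theorem borel_zip_stabilizer_iso_product_over_cycles
    (p e q : ℕ) [Fact p.Prime] (he : 1 ≤ e) (hq : q = p ^ e)
    (n : ℕ) (hn : 1 ≤ n) (σ : Equiv.Perm (Fin n)) :
    ∃ H : Subgroup (Fin n → (Fbar p)ˣ),
      (H : Set (Fin n → (Fbar p)ˣ)) =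
        {a : Fin n → (Fbar p)ˣ | ∀ i : Fin n, a i = (a (σ⁻¹ i)) ^ q} ∧
      ∃ s : Finset (Fin n),
        (∀ x : Fin n, ∃! r : Fin n, r ∈ s ∧ σ.SameCycle r x) ∧
        Nonempty (H ≃*
          ((r : s) → subfieldUnits (Fbar p) (q ^ Function.minimalPeriod σ (r : Fin n)))) ∧
        Nat.card H = ∏ r ∈ s, (q ^ Function.minimalPeriod σ r - 1) := by
  classical
  -- the subgroup H
  set H : Subgroup (Fin n → (Fbar p)ˣ) := {
    carrier := {a : Fin n → (Fbar p)ˣ | ∀ i : Fin n, a i = (a (σ⁻¹ i)) ^ q}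
    one_mem' := by intro i; simp
    mul_mem' := by
      intro a b ha hb i
      simp only [Pi.mul_apply, mul_pow]
      rw [← ha i, ← hb i]
    inv_mem' := by
      intro a ha i
      simp only [Pi.inv_apply, inv_pow]
      rw [← ha i] } with hH
  have hHmem : ∀ a : Fin n → (Fbar p)ˣ, a ∈ H ↔ ∀ i : Fin n, a i = (a (σ⁻¹ i)) ^ q := by
    intro a; rw [hH]; exact Iff.rfl
  refine ⟨H, rfl, ?_⟩
  -- minimal periods are positive
  have hper : ∀ x : Fin n, 0 < Function.minimalPeriod σ x := by
    intro x
    refine Function.IsPeriodicPt.minimalPeriod_pos (orderOf_pos σ) ?_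
    show σ^[orderOf σ] x = x
    rw [Equiv.Perm.iterate_eq_pow, pow_orderOf_eq_one]
    rfl
  -- the set of representatives: minimal elements of cycles
  set s : Finset (Fin n) :=
    Finset.univ.filter (fun r => ∀ y, σ.SameCycle r y → r ≤ y) with hs
  have hex : ∀ x : Fin n, ∃! r : Fin n, r ∈ s ∧ σ.SameCycle r x := by
    intro x
    set t := Finset.univ.filter (fun y => σ.SameCycle y x) with ht
    have hxt : x ∈ t := by simp [ht, Equiv.Perm.SameCycle.refl]
    have htne : t.Nonempty := ⟨x, hxt⟩
    have hmint : σ.SameCycle (t.min' htne) x :=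
      (Finset.mem_filter.mp (t.min'_mem htne)).2
    refine ⟨t.min' htne, ⟨?_, hmint⟩, ?_⟩
    · simp only [hs, Finset.mem_filter]
      refine ⟨Finset.mem_univ _, ?_⟩
      intro y hy
      exact Finset.min'_le t y (by
        simp only [ht, Finset.mem_filter]
        exact ⟨Finset.mem_univ _, hy.symm.trans hmint⟩)
    · rintro r ⟨hrs, hrx⟩
      have h1 : t.min' htne ≤ r := Finset.min'_le t r (by
        simp only [ht, Finset.mem_filter]
        exact ⟨Finset.mem_univ _, hrx⟩)
      have h2 : r ≤ t.min' htne := by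
        simp only [hs, Finset.mem_filter] at hrs
        exact hrs.2 _ (hrx.trans hmint.symm)
      exact le_antisymm h2 h1
  refine ⟨s, hex, ?_⟩
  -- the representative function
  have hrep_mem : ∀ x : Fin n, (hex x).choose ∈ s := fun x => (hex x).choose_spec.1.1
  have hrep_cyc : ∀ x : Fin n, σ.SameCycle ((hex x).choose) x := fun x => (hex x).choose_spec.1.2
  have hrep_uniq : ∀ x r : Fin n, r ∈ s → σ.SameCycle r x → r = (hex x).choose :=
    fun x r h1 h2 => (hex x).choose_spec.2 r ⟨h1, h2⟩
  set rep : Fin n → Fin n := fun x => (hex x).choose with hrepdef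
  -- a natural number moving the representative to the point
  have hkex : ∀ x : Fin n, ∃ k : ℕ, σ^[k] (rep x) = x := by
    intro x
    obtain ⟨i, _, hi⟩ := (hrep_cyc x).exists_pow_eq'
    exact ⟨i, hi⟩
  choose kf hkf using hkex
  -- key invariance lemma
  have key : ∀ (r : Fin n) (u : (Fbar p)ˣ),
      u ^ q ^ Function.minimalPeriod σ r = u →
      ∀ k k' : ℕ, σ^[k] r = σ^[k'] r → u ^ q ^ k = u ^ q ^ k' := by
    intro r u hu k k' hkk
    have hℓ : 0 < Function.minimalPeriod σ r := hper r
    have h1 : σ^[k % Function.minimalPeriod σ r] r = σ^[k' % Function.minimalPeriod σ r] r := by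
      rw [Function.iterate_mod_minimalPeriod_eq, Function.iterate_mod_minimalPeriod_eq]
      exact hkk
    have h2 : k % Function.minimalPeriod σ r = k' % Function.minimalPeriod σ r :=
      Function.iterate_injOn_Iio_minimalPeriod (Nat.mod_lt _ hℓ) (Nat.mod_lt _ hℓ) h1
    rw [pow_q_mod hℓ hu k, pow_q_mod hℓ hu k', h2]
  -- iteration formula for members of H
  have hiter : ∀ (a : Fin n → (Fbar p)ˣ), (∀ i, a i = a (σ⁻¹ i) ^ q) →
      ∀ (k : ℕ) (j : Fin n), a (σ^[k] j) = a j ^ q ^ k := by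
    intro a ha
    have hstep : ∀ j, a (σ j) = a j ^ q := by
      intro j
      have := ha (σ j)
      rwa [show σ⁻¹ (σ j) = j from σ.symm_apply_apply j] at this
    intro k
    induction k with
    | zero => intro j; simp
    | succ t ih =>
      intro j
      rw [Function.iterate_succ_apply', hstep, ih, ← pow_mul, ← pow_succ]
  -- members of H take values in the subfields
  have hmemsub : ∀ (a : Fin n → (Fbar p)ˣ), (∀ i, a i = a (σ⁻¹ i) ^ q) →
      ∀ r : Fin n, a r ∈ subfieldUnits (Fbar p) (q ^ Function.minimalPeriod σ r) := by
    intro a ha r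
    have h1 : a (σ^[Function.minimalPeriod σ r] r) = a r ^ q ^ Function.minimalPeriod σ r :=
      hiter a ha _ r
    rw [Function.iterate_minimalPeriod] at h1
    show (↑(a r) : Fbar p) ^ (q ^ Function.minimalPeriod σ r) = ↑(a r)
    rw [← Units.val_pow_eq_pow_val, ← h1]
  -- the homomorphism
  set φ : H →* ((r : s) → subfieldUnits (Fbar p) (q ^ Function.minimalPeriod σ (r : Fin n))) := {
    toFun := fun a r => ⟨(a : Fin n → (Fbar p)ˣ) r.1,
      hmemsub a.1 ((hHmem a.1).mp a.2) r.1⟩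
    map_one' := by funext r; exact Subtype.ext rfl
    map_mul' := by intro a b; funext r; exact Subtype.ext rfl } with hφ
  have hbij : Function.Bijective φ := by
    constructor
    · intro a b hab
      apply Subtype.ext
      funext x
      have h1 := congrFun hab ⟨rep x, hrep_mem x⟩
      have h2 : (a : Fin n → (Fbar p)ˣ) (rep x) = (b : Fin n → (Fbar p)ˣ) (rep x) :=
        congrArg Subtype.val h1
      calc (a : Fin n → (Fbar p)ˣ) x
          = (a : Fin n → (Fbar p)ˣ) (σ^[kf x] (rep x)) := by rw [hkf x]
        _ = (a : Fin n → (Fbar p)ˣ) (rep x) ^ q ^ kf x :=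
            hiter _ ((hHmem _).mp a.2) _ _
        _ = (b : Fin n → (Fbar p)ˣ) (rep x) ^ q ^ kf x := by rw [h2]
        _ = (b : Fin n → (Fbar p)ˣ) (σ^[kf x] (rep x)) :=
            (hiter _ ((hHmem _).mp b.2) _ _).symm
        _ = (b : Fin n → (Fbar p)ˣ) x := by rw [hkf x]
    · intro b
      set a : Fin n → (Fbar p)ˣ :=
        fun x => ((b ⟨rep x, hrep_mem x⟩ : subfieldUnits (Fbar p) _) : (Fbar p)ˣ) ^ q ^ kf x
        with hadef
      have hbu : ∀ r : s, ((b r : subfieldUnits (Fbar p) _) : (Fbar p)ˣ)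
          ^ q ^ Function.minimalPeriod σ (r : Fin n) = ((b r) : (Fbar p)ˣ) := by
        intro r
        have hm := (b r).2
        exact Units.ext (by rw [Units.val_pow_eq_pow_val]; exact hm)
      have ha : ∀ i : Fin n, a i = (a (σ⁻¹ i)) ^ q := by
        intro i
        set x := σ⁻¹ i with hx
        have hσx : σ x = i := by rw [hx]; exact σ.apply_symm_apply i
        have hrepeq : rep x = rep i := by
          apply hrep_uniq i (rep x) (hrep_mem x)
          exact (hrep_cyc x).trans ⟨1, by simpa using hσx⟩
        show a i = a x ^ q
        rw [hadef]
        simp only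
        rw [← pow_mul, ← pow_succ]
        have hidx : (⟨rep x, hrep_mem x⟩ : s) = ⟨rep i, hrep_mem i⟩ := Subtype.ext hrepeq
        have hbval : ((b ⟨rep x, hrep_mem x⟩ : subfieldUnits (Fbar p) _) : (Fbar p)ˣ)
            = ((b ⟨rep i, hrep_mem i⟩ : subfieldUnits (Fbar p) _) : (Fbar p)ˣ) :=
          congrArg (fun j : s => ((b j : subfieldUnits (Fbar p) _) : (Fbar p)ˣ)) hidx
        rw [hbval]
        have hiterate : σ^[kf x + 1] (rep i) = i := by
          rw [← hrepeq, Function.iterate_succ_apply', hkf x, hσx]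
        exact key (rep i) _ (hbu ⟨rep i, hrep_mem i⟩) (kf i) (kf x + 1)
          (by rw [hkf i, hiterate])
      refine ⟨⟨a, (hHmem a).mpr ha⟩, ?_⟩
      funext r
      apply Subtype.ext
      show a r.1 = ((b r : subfieldUnits (Fbar p) _) : (Fbar p)ˣ)
      have hre : rep r.1 = r.1 :=
        (hrep_uniq r.1 r.1 r.2 (Equiv.Perm.SameCycle.refl σ r.1)).symm
      rw [hadef]
      simp only
      have hidx : (⟨rep r.1, hrep_mem r.1⟩ : s) = r := Subtype.ext hre
      have hbval : ((b ⟨rep r.1, hrep_mem r.1⟩ : subfieldUnits (Fbar p) _) : (Fbar p)ˣ)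
          = ((b r : subfieldUnits (Fbar p) _) : (Fbar p)ˣ) :=
        congrArg (fun j : s => ((b j : subfieldUnits (Fbar p) _) : (Fbar p)ˣ)) hidx
      rw [hbval]
      have h0 : σ^[kf r.1] r.1 = σ^[0] r.1 := by
        have h' := hkf r.1
        rw [hre] at h'
        simpa using h'
      have := key r.1 _ (hbu r) (kf r.1) 0 h0
      simpa using this
  set eqv := MulEquiv.ofBijective φ hbij with heqv
  refine ⟨⟨eqv⟩, ?_⟩
  -- cardinality
  rw [Nat.card_congr eqv.toEquiv, Nat.card_pi, ← Finset.prod_coe_sort s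
    (fun r => q ^ Function.minimalPeriod σ r - 1)]
  apply Finset.prod_congr rfl
  intro r _
  rw [hq, ← pow_mul]
  exact card_subfieldUnits p (e * Function.minimalPeriod σ r)
    (Nat.mul_pos (by omega) (hper r))
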